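/- Let f : ℝ → ℝ be symmetric about c and unimodal with mode c, let a ≤ b, and define H(s) = ∫_a^b f(x - s) dx and s_max = (a+b)/2 - c. Then H is monotone in distance to s_max: for all s1, s2 ∈ ℝ, if |s_max - s1| ≥ |s_max - s2| then H(s1) ≤ H(s2). -/

import Mathlib

open MeasureTheory

/-- `H` is monotone in the distance to `s_max`: if
`|s_max - s1| ≥ |s_max - s2|` then `H s1 ≤ H s2`. -/
theorem stmt_1
    (f : ℝ → ℝ) (c : ℝ)
    (hdiff : Differentiable ℝ f)
    (hnonneg : ∀ x, 0 ≤ f x)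
    (hint : Integrable f)
    (hone : ∫ x, f x = 1)
    (hsym : ∀ x, f (c - x) = f (c + x))
    (hup : ∀ x < c, 0 ≤ deriv f x)
    (hdown : ∀ x > c, deriv f x ≤ 0)
    (a b : ℝ) (hab : a ≤ b) :
    ∀ s1 s2 : ℝ, |((a + b) / 2 - c) - s1| ≥ |((a + b) / 2 - c) - s2| →
      (∫ x in a..b, f (x - s1)) ≤ ∫ x in a..b, f (x - s2) := by
  set d : ℝ := (b - a) / 2 with hd
  have hd0 : 0 ≤ d := by rw [hd]; linarith
  have hcont : Continuous f := hdiff.continuous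
  have hII : ∀ u v : ℝ, IntervalIntegrable f volume u v := fun u v =>
    hint.intervalIntegrable
  have hsym' : ∀ y, f (2 * c - y) = f y := by
    intro y
    have h := hsym (y - c)
    have h1 : c - (y - c) = 2 * c - y := by ring
    have h2 : c + (y - c) = y := by ring
    rw [h1, h2] at h
    exact h
  have hanti : AntitoneOn f (Set.Ici c) := by
    apply antitoneOn_of_deriv_nonpos (convex_Ici c) hcont.continuousOn
    · intro x hx
      exact (hdiff x).differentiableWithinAt
    · intro x hx
      rw [interior_Ici] at hx
      exact hdown x hx
  set φ : ℝ → ℝ := fun t => ∫ x in (c - d + t)..(c + d + t), f x with hφ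
  have hH : ∀ s : ℝ, (∫ x in a..b, f (x - s)) = φ ((a + b) / 2 - c - s) := by
    intro s
    rw [intervalIntegral.integral_comp_sub_right, hφ]
    have h1 : a - s = c - d + ((a + b) / 2 - c - s) := by rw [hd]; ring
    have h2 : b - s = c + d + ((a + b) / 2 - c - s) := by rw [hd]; ring
    rw [h1, h2]
  have hφeven : ∀ t, φ (-t) = φ t := by
    intro t
    have h1 : φ t = ∫ x in (c - d + t)..(c + d + t), f (2 * c - x) := by
      rw [hφ]
      apply intervalIntegral.integral_congr
      intro x _
      exact (hsym' x).symm
    rw [h1, intervalIntegral.integral_comp_sub_left]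
    have e1 : 2 * c - (c + d + t) = c - d + -t := by ring
    have e2 : 2 * c - (c - d + t) = c + d + -t := by ring
    rw [e1, e2]
  set F : ℝ → ℝ := fun x => ∫ u in (0:ℝ)..x, f u with hF
  have hFderiv : ∀ x : ℝ, HasDerivAt F (f x) x := fun x =>
    intervalIntegral.integral_hasDerivAt_right (hII 0 x)
      (hcont.stronglyMeasurableAtFilter _ _) hcont.continuousAt
  have hφF : φ = fun t => F (c + d + t) - F (c - d + t) := by
    funext t
    have := intervalIntegral.integral_add_adjacent_intervals
      (hII 0 (c - d + t)) (hII (c - d + t) (c + d + t))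
    simp only [hφ, hF]
    linarith
  have hφderiv : ∀ t : ℝ, HasDerivAt φ (f (c + d + t) - f (c - d + t)) t := by
    intro t
    have h1 : HasDerivAt (fun t : ℝ => F (c + d + t)) (f (c + d + t)) t := by
      have hb : HasDerivAt (fun t : ℝ => c + d + t) 1 t := (hasDerivAt_id t).const_add (c + d)
      have h := (hFderiv (c + d + t)).comp t hb
      rw [mul_one] at h
      exact h
    have h2 : HasDerivAt (fun t : ℝ => F (c - d + t)) (f (c - d + t)) t := by
      have hb : HasDerivAt (fun t : ℝ => c - d + t) 1 t := (hasDerivAt_id t).const_add (c - d)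
      have h := (hFderiv (c - d + t)).comp t hb
      rw [mul_one] at h
      exact h
    rw [hφF]
    exact h1.sub h2
  have hφanti : AntitoneOn φ (Set.Ici (0:ℝ)) := by
    apply antitoneOn_of_deriv_nonpos (convex_Ici 0)
    · intro x _
      exact (hφderiv x).continuousAt.continuousWithinAt
    · intro x _
      exact (hφderiv x).differentiableAt.differentiableWithinAt
    · intro x hx
      rw [interior_Ici] at hx
      have hx0 : 0 < x := hx
      rw [(hφderiv x).deriv]
      have key : f (c + d + x) ≤ f (c - d + x) := by
        rcases le_total (c - d + x) c with h | h
        · have e : f (c - d + x) = f (c + d - x) := by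
            rw [← hsym' (c - d + x)]
            congr 1
            ring
          rw [e]
          apply hanti
          · simp only [Set.mem_Ici]; linarith
          · simp only [Set.mem_Ici]; linarith
          · linarith [hx0.le]
        · apply hanti
          · exact h
          · simp only [Set.mem_Ici]; linarith [hx0.le]
          · linarith [hx0.le]
      linarith
  intro s1 s2 hge
  rw [hH s1, hH s2]
  have habs : ∀ t : ℝ, φ t = φ |t| := by
    intro t
    rcases abs_cases t with ⟨h, _⟩ | ⟨h, _⟩
    · rw [h]
    · rw [h, hφeven]
  calc φ ((a + b) / 2 - c - s1) = φ |(a + b) / 2 - c - s1| := habs _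
    _ ≤ φ |(a + b) / 2 - c - s2| :=
        hφanti (Set.mem_Ici.mpr (abs_nonneg _)) (Set.mem_Ici.mpr (abs_nonneg _)) hge
    _ = φ ((a + b) / 2 - c - s2) := (habs _).symm
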